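/- Let A ∈ ℝ^{n×n} with operator norm ‖A‖ = σ_1 (the largest singular value of A). Then for every t with 1 ≤ t ≤ n, M_t(A)² ≥ (σ_1²/t)^t; equivalently M_t(A) ≥ (σ_1/√t)^t. -/

import Mathlib

open Matrix

noncomputable section

/-- The Euclidean norm on `Fin n → ℝ`. -/
def eucNorm {n : ℕ} (x : Fin n → ℝ) : ℝ := Real.sqrt (∑ i, (x i) ^ 2)

/-- `P` is the matrix of the orthogonal projection of `ℝⁿ` onto the subspace `V`:
the unique symmetric idempotent matrix whose range is `V`. -/
def IsProjMatrix {n : ℕ} (P : Matrix (Fin n) (Fin n) ℝ) (V : Submodule ℝ (Fin n → ℝ)) : Prop :=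
  P.IsSymm ∧ P * P = P ∧ LinearMap.range P.mulVecLin = V

/-- A real square matrix is Schur stable if every complex eigenvalue has modulus `< 1`,
i.e. its spectral radius is `< 1`. -/
def SchurStable {n : ℕ} (M : Matrix (Fin n) (Fin n) ℝ) : Prop :=
  ∀ (μ : ℂ) (v : Fin n → ℂ), v ≠ 0 →
    (M.map (algebraMap ℝ ℂ)).mulVec v = μ • v → ‖μ‖ < 1

/-- The operator norm of a matrix induced by the Euclidean vector norm:
`‖M‖ = sup {‖M u‖ : ‖u‖ = 1}`. -/
def l2OpNorm {n m : ℕ} (M : Matrix (Fin n) (Fin m) ℝ) : ℝ :=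
  sSup {c | ∃ x : Fin m → ℝ, eucNorm x = 1 ∧ c = eucNorm (M.mulVec x)}

/-- The instability number of order `t` of `A`:
`M_t(A) = sup { ∏ i ‖A v i‖ : (v 1, …, v t) orthonormal in ℝⁿ }`. -/
def instabilityNumber {n : ℕ} (A : Matrix (Fin n) (Fin n) ℝ) (t : ℕ) : ℝ :=
  sSup {c | ∃ v : Fin t → (Fin n → ℝ),
    (∀ i j, v i ⬝ᵥ v j = if i = j then 1 else 0) ∧ c = ∏ i, eucNorm (A.mulVec (v i))}

lemma eucNorm_nonneg {n : ℕ} (x : Fin n → ℝ) : 0 ≤ eucNorm x := Real.sqrt_nonneg _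

lemma eucNorm_sq {n : ℕ} (x : Fin n → ℝ) : eucNorm x ^ 2 = x ⬝ᵥ x := by
  rw [eucNorm, Real.sq_sqrt (Finset.sum_nonneg fun i _ => sq_nonneg _)]
  simp [dotProduct, pow_two]

lemma eucNorm_one_of_dot {n : ℕ} {x : Fin n → ℝ} (h : x ⬝ᵥ x = 1) : eucNorm x = 1 := by
  rw [eucNorm]
  have : ∑ i, (x i) ^ 2 = 1 := by simpa [dotProduct, pow_two] using h
  simp [this]

lemma sum_smul_dot {n t : ℕ} (u : Fin t → (Fin n → ℝ))
    (hu : ∀ k l, u k ⬝ᵥ u l = if k = l then 1 else 0) (a b : Fin t → ℝ) :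
    (∑ k, a k • u k) ⬝ᵥ (∑ k, b k • u k) = ∑ k, a k * b k := by
  have h1 : (∑ k, a k • u k) ⬝ᵥ (∑ k, b k • u k)
      = ∑ i, ∑ k, ∑ l, a k * b l * (u k i * u l i) := by
    simp only [dotProduct, Finset.sum_apply, Pi.smul_apply, smul_eq_mul]
    refine Finset.sum_congr rfl fun i _ => ?_
    rw [Finset.sum_mul_sum]
    exact Finset.sum_congr rfl fun k _ => Finset.sum_congr rfl fun l _ => by ring
  rw [h1, Finset.sum_comm]
  have h2 : ∀ k, ∑ i, ∑ l, a k * b l * (u k i * u l i)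
      = ∑ l, a k * b l * (u k ⬝ᵥ u l) := by
    intro k
    rw [Finset.sum_comm]
    exact Finset.sum_congr rfl fun l _ => by rw [dotProduct, Finset.mul_sum]
  simp only [h2, hu, mul_ite, mul_one, mul_zero]
  simp [Finset.sum_ite_eq', Finset.mem_univ]

lemma exists_Q (t : ℕ) (ht : 1 ≤ t) : ∃ Q : Matrix (Fin t) (Fin t) ℝ,
    (∀ i i', ∑ k, Q i k * Q i' k = if i = i' then 1 else 0) ∧
    ∀ i, Q i ⟨0, ht⟩ = 1 / Real.sqrt t := by
  have ht0 : (0:ℝ) < t := by exact_mod_cast ht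
  set s : ℝ := 1 / Real.sqrt t with hs
  have hs_sq : s ^ 2 = 1 / t := by
    rw [hs, div_pow, one_pow, Real.sq_sqrt ht0.le]
  have hts : (t:ℝ) * s ^ 2 = 1 := by rw [hs_sq]; field_simp
  have hs_pos : 0 < s := by positivity
  rcases eq_or_lt_of_le ht with h1 | h2
  · -- t = 1
    have hs1 : s = 1 := by rw [hs, ← h1]; norm_num
    refine ⟨fun _ _ => 1, fun i i' => ?_, fun i => hs1.symm⟩
    have : i = i' := Fin.ext (by have := i.isLt; have := i'.isLt; omega)
    rw [if_pos this]
    simp [Finset.sum_const, ← h1]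
  · -- t ≥ 2
    have hs_lt : s < 1 := by
      rw [hs, div_lt_one (by positivity)]
      have h1t : (1:ℝ) < (t:ℝ) := by exact_mod_cast h2
      nlinarith [Real.sq_sqrt ht0.le, Real.sqrt_nonneg (t:ℝ)]
    have h1s : (1:ℝ) - s ≠ 0 := by linarith
    set z0 : Fin t := ⟨0, ht⟩ with hz0def
    set e : Fin t → ℝ := fun k => if k = z0 then 1 else 0 with he
    set z : Fin t → ℝ := fun k => e k - s with hz
    have he2 : ∀ k, e k * e k = e k := fun k => by simp only [he]; split <;> norm_num
    have hse : ∑ k, e k = 1 := by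
      simp only [he]; rw [Finset.sum_ite_eq' Finset.univ z0]; simp
    have hN : ∑ k, z k * z k = 2 * (1 - s) := by
      have expand : ∀ k, z k * z k = (e k * e k - 2 * s * e k) + s^2 := fun k => by
        simp only [hz]; ring
      rw [Finset.sum_congr rfl fun k _ => expand k, Finset.sum_add_distrib,
        Finset.sum_sub_distrib, ← Finset.mul_sum,
        Finset.sum_congr rfl fun k _ => he2 k, hse, Finset.sum_const, Finset.card_univ,
        Fintype.card_fin, nsmul_eq_mul]
      linear_combination hts
    set N : ℝ := 2 * (1 - s) with hNdef
    have hNne : N ≠ 0 := by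
      rw [hNdef]; intro hcon; apply h1s; linarith
    set c : ℝ := 2 / N with hc
    have hcN : c * N = 2 := by rw [hc]; field_simp
    have hcz : c * (1 - s) = 1 := by
      rw [hc, hNdef]; field_simp
    refine ⟨fun i k => (if i = k then 1 else 0) - c * z i * z k, fun i i' => ?_, fun i => ?_⟩
    · have expand : ∀ k, ((if i = k then (1:ℝ) else 0) - c * z i * z k) *
          ((if i' = k then (1:ℝ) else 0) - c * z i' * z k)
          = ((if i = k then (1:ℝ) else 0) * (if i' = k then 1 else 0)
            - ((c * z i') * ((if i = k then (1:ℝ) else 0) * z k)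
              + (c * z i) * ((if i' = k then (1:ℝ) else 0) * z k)))
            + (c * z i * (c * z i')) * (z k * z k) := fun k => by ring
      rw [Finset.sum_congr rfl fun k _ => expand k, Finset.sum_add_distrib,
        Finset.sum_sub_distrib, Finset.sum_add_distrib, ← Finset.mul_sum, ← Finset.mul_sum,
        ← Finset.mul_sum]
      have s1 : ∑ k, (if i = k then (1:ℝ) else 0) * (if i' = k then 1 else 0)
          = if i = i' then 1 else 0 := by
        simp only [ite_mul, one_mul, zero_mul, Finset.sum_ite_eq, Finset.mem_univ, if_true]
        by_cases h : i = i' <;> simp [h, eq_comm]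
      have s2 : ∀ j : Fin t, ∑ k, (if j = k then (1:ℝ) else 0) * z k = z j := fun j => by
        simp [Finset.sum_ite_eq, Finset.mem_univ]
      rw [s1, s2, s2, hN]
      linear_combination (c * z i * z i') * hcN
    · have hzz0 : z z0 = 1 - s := by simp [hz, he]
      by_cases h : i = z0
      · show (if i = z0 then (1:ℝ) else 0) - c * z i * z z0 = s
        rw [if_pos h, h, hzz0]
        linear_combination (s - 1) * hcz
      · show (if i = z0 then (1:ℝ) else 0) - c * z i * z z0 = s
        rw [if_neg h, hzz0]
        have hzi : z i = -s := by simp [hz, he, h]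
        rw [hzi]
        linear_combination s * hcz

lemma eucNorm_mulVec_le {n m : ℕ} (A : Matrix (Fin n) (Fin m) ℝ) {x : Fin m → ℝ}
    (hx : eucNorm x = 1) : eucNorm (A.mulVec x) ≤ Real.sqrt (∑ i, ∑ j, A i j ^ 2) := by
  have hx2 : ∑ j, (x j) ^ 2 = 1 := Real.sqrt_eq_one.mp hx
  rw [eucNorm]
  apply Real.sqrt_le_sqrt
  have : ∀ i, (A.mulVec x i) ^ 2 ≤ ∑ j, A i j ^ 2 := by
    intro i
    calc (A.mulVec x i) ^ 2 = (∑ j, A i j * x j) ^ 2 := by rw [mulVec, dotProduct]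
    _ ≤ (∑ j, A i j ^ 2) * ∑ j, (x j) ^ 2 := Finset.sum_mul_sq_le_sq_mul_sq _ _ _
    _ = ∑ j, A i j ^ 2 := by rw [hx2, mul_one]
  exact Finset.sum_le_sum fun i _ => this i

lemma instab_bddAbove {n : ℕ} (A : Matrix (Fin n) (Fin n) ℝ) (t : ℕ) :
    BddAbove {c | ∃ v : Fin t → (Fin n → ℝ),
      (∀ i j, v i ⬝ᵥ v j = if i = j then 1 else 0) ∧ c = ∏ i, eucNorm (A.mulVec (v i))} := by
  refine ⟨(Real.sqrt (∑ i, ∑ j, A i j ^ 2)) ^ t, ?_⟩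
  rintro c ⟨v, hv, rfl⟩
  rw [show (Real.sqrt (∑ i, ∑ j, A i j ^ 2)) ^ t
    = ∏ _i : Fin t, Real.sqrt (∑ i, ∑ j, A i j ^ 2) by simp]
  apply Finset.prod_le_prod (fun i _ => eucNorm_nonneg _)
  intro i _
  exact eucNorm_mulVec_le A (eucNorm_one_of_dot (by simpa using hv i i))

lemma opNorm_bddAbove {n m : ℕ} (A : Matrix (Fin n) (Fin m) ℝ) :
    BddAbove {c | ∃ x : Fin m → ℝ, eucNorm x = 1 ∧ c = eucNorm (A.mulVec x)} := by
  refine ⟨Real.sqrt (∑ i, ∑ j, A i j ^ 2), ?_⟩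
  rintro c ⟨x, hx, rfl⟩
  exact eucNorm_mulVec_le A hx

/-- Lower bound on the instability number: `M_t(A) ≥ (σ₁/√t)^t`. -/
theorem stmt13 {n : ℕ} (A : Matrix (Fin n) (Fin n) ℝ) (σ1 : ℝ) (hσ1 : σ1 = l2OpNorm A) :
    ∀ t, 1 ≤ t → t ≤ n →
      (σ1 ^ 2 / (t : ℝ)) ^ t ≤ instabilityNumber A t ^ 2 ∧
      (σ1 / Real.sqrt (t : ℝ)) ^ t ≤ instabilityNumber A t := by
  intro t ht htn
  have hn : 1 ≤ n := le_trans ht htn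
  have ht0 : (0:ℝ) < t := by exact_mod_cast ht
  haveI : Nonempty (Fin n) := ⟨⟨0, hn⟩⟩
  -- spectral setup
  have hS : (Aᴴ * A).IsHermitian := isHermitian_conjTranspose_mul_self A
  set b := hS.eigenvectorBasis with hb
  set ev := hS.eigenvalues with hev
  set u : Fin n → (Fin n → ℝ) := fun j => b j with hu
  have hinner : ∀ y z : Fin n → ℝ,
      (inner ℝ (WithLp.toLp 2 y : EuclideanSpace ℝ (Fin n)) (WithLp.toLp 2 z)) = y ⬝ᵥ z := by
    intro y z
    rw [EuclideanSpace.inner_eq_star_dotProduct]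
    simp [dotProduct, star, mul_comm]
  have hud : ∀ k l, u k ⬝ᵥ u l = if k = l then 1 else 0 := by
    intro k l
    rw [← hinner]
    exact orthonormal_iff_ite.mp b.orthonormal k l
  have key : ∀ x : Fin n → ℝ, eucNorm (A.mulVec x) ^ 2 = x ⬝ᵥ ((Aᴴ * A).mulVec x) := by
    intro x
    rw [eucNorm_sq]
    have h1 : x ⬝ᵥ ((Aᵀ * A) *ᵥ x) = (x ᵥ* Aᵀ) ⬝ᵥ (A *ᵥ x) := by
      rw [← mulVec_mulVec, dotProduct_mulVec]
    rw [conjTranspose_eq_transpose_of_trivial, h1, vecMul_transpose]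
  have heig : ∀ j, (Aᴴ * A).mulVec (u j) = ev j • u j := fun j =>
    hS.mulVec_eigenvectorBasis j
  have hexp : ∀ x : Fin n → ℝ, x = ∑ j, (u j ⬝ᵥ x) • u j := by
    intro x
    have h := congrArg (WithLp.ofLp (p := 2)) (b.sum_repr (WithLp.toLp 2 x)).symm
    simp only [WithLp.ofLp_sum, WithLp.ofLp_smul, WithLp.ofLp_toLp, b.repr_apply_apply] at h
    exact h.trans (Finset.sum_congr rfl fun j _ => by rw [← hinner])
  have hSx : ∀ (m : ℕ) (w : Fin m → Fin n) (a : Fin m → ℝ),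
      (Aᴴ * A) *ᵥ (∑ k, a k • u (w k)) = ∑ k, (a k * ev (w k)) • u (w k) := by
    intro m w a
    rw [← mulVecLin_apply, map_sum]
    refine Finset.sum_congr rfl fun k _ => ?_
    rw [mulVecLin_apply, mulVec_smul, heig, smul_smul]
  have dot_quad : ∀ (m : ℕ) (w : Fin m → Fin n), Function.Injective w → ∀ a : Fin m → ℝ,
      (∑ k, a k • u (w k)) ⬝ᵥ ((Aᴴ * A) *ᵥ (∑ k, a k • u (w k)))
        = ∑ k, a k * (a k * ev (w k)) := by
    intro m w hw a
    rw [hSx m w a]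
    exact sum_smul_dot (fun k => u (w k))
      (fun k l => by rw [hud]; simp [hw.eq_iff]) a _
  have hev_nonneg : ∀ j, 0 ≤ ev j := by
    intro j
    have h1 : eucNorm (A.mulVec (u j)) ^ 2 = ev j := by
      rw [key, heig, dotProduct_smul]
      simp [hud j j]
    rw [← h1]
    exact sq_nonneg _
  obtain ⟨j0, hj0⟩ := Finite.exists_max ev
  -- norm bound via top eigenvalue
  have hbound : ∀ x : Fin n → ℝ, eucNorm x = 1 → eucNorm (A.mulVec x) ^ 2 ≤ ev j0 := by
    intro x hx1
    have hxx : x ⬝ᵥ x = 1 := by rw [← eucNorm_sq, hx1]; norm_num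
    set a : Fin n → ℝ := fun j => u j ⬝ᵥ x with ha
    have hx := hexp x
    have h1 : eucNorm (A.mulVec x) ^ 2 = ∑ j, a j * (a j * ev j) := by
      rw [key]
      conv_lhs => rw [hx]
      exact dot_quad n (fun j => j) Function.injective_id a
    have h2 : ∑ j, a j * a j = 1 := by
      have h3 := sum_smul_dot u hud a a
      rw [← hx, hxx] at h3
      exact h3.symm
    rw [h1]
    calc ∑ j, a j * (a j * ev j) ≤ ∑ j, a j * a j * ev j0 :=
          Finset.sum_le_sum fun j _ => by nlinarith [hj0 j, sq_nonneg (a j), hev_nonneg j]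
    _ = ev j0 := by rw [← Finset.sum_mul, h2, one_mul]
  -- σ1 facts
  have hu1 : ∀ j, eucNorm (u j) = 1 := fun j => eucNorm_one_of_dot (by simpa using hud j j)
  have hσ_nonneg : 0 ≤ σ1 := by
    rw [hσ1, l2OpNorm]
    exact le_csSup_of_le (opNorm_bddAbove A)
      ⟨u j0, hu1 j0, rfl⟩ (eucNorm_nonneg _)
  have hσ_le : σ1 ≤ Real.sqrt (ev j0) := by
    rw [hσ1, l2OpNorm]
    refine csSup_le ⟨_, u j0, hu1 j0, rfl⟩ ?_
    rintro c ⟨x, hx1, rfl⟩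
    rw [Real.le_sqrt (eucNorm_nonneg _) (hev_nonneg j0)]
    exact hbound x hx1
  have hσ2 : σ1 ^ 2 ≤ ev j0 := by
    have := pow_le_pow_left₀ hσ_nonneg hσ_le 2
    rwa [Real.sq_sqrt (hev_nonneg j0)] at this
  -- injection Fin t → Fin n hitting j0 at index 0
  obtain ⟨ι, hιinj, hι0⟩ : ∃ ι : Fin t → Fin n, Function.Injective ι ∧ ι ⟨0, ht⟩ = j0 := by
    refine ⟨(Equiv.swap ((Fin.castLE htn) ⟨0, ht⟩) j0) ∘ Fin.castLE htn,
      (Equiv.injective _).comp (Fin.castLE_injective htn), ?_⟩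
    simp [Equiv.swap_apply_left]
  obtain ⟨Q, hQo, hQ0⟩ := exists_Q t ht
  set v : Fin t → (Fin n → ℝ) := fun i => ∑ k, Q i k • u (ι k) with hvdef
  have hv_ortho : ∀ i i', v i ⬝ᵥ v i' = if i = i' then 1 else 0 := by
    intro i i'
    have h3 := sum_smul_dot (fun k => u (ι k))
      (fun k l => by rw [hud]; simp [hιinj.eq_iff]) (Q i) (Q i')
    exact h3.trans (hQo i i')
  have hst : Real.sqrt t * Real.sqrt t = t := Real.mul_self_sqrt ht0.le
  have hv_low : ∀ i, σ1 / Real.sqrt t ≤ eucNorm (A.mulVec (v i)) := by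
    intro i
    have h2 : eucNorm (A.mulVec (v i)) ^ 2 = ∑ k, Q i k * (Q i k * ev (ι k)) := by
      rw [key]
      exact dot_quad t ι hιinj (Q i)
    have h3 : σ1 ^ 2 / t ≤ eucNorm (A.mulVec (v i)) ^ 2 := by
      rw [h2]
      have hterm : ∀ k, 0 ≤ Q i k * (Q i k * ev (ι k)) := fun k => by
        nlinarith [hev_nonneg (ι k), sq_nonneg (Q i k)]
      have hsingle := Finset.single_le_sum
        (f := fun k => Q i k * (Q i k * ev (ι k))) (fun k _ => hterm k)
        (Finset.mem_univ (⟨0, ht⟩ : Fin t))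
      simp only [hQ0, hι0] at hsingle
      calc σ1 ^ 2 / t ≤ ev j0 / t := by gcongr
      _ = 1 / Real.sqrt t * (1 / Real.sqrt t * ev j0) := by
          rw [show 1 / Real.sqrt t * (1 / Real.sqrt t * ev j0)
            = ev j0 / (Real.sqrt t * Real.sqrt t) by ring, hst]
      _ ≤ _ := hsingle
    have h4 : 0 ≤ σ1 / Real.sqrt t := by positivity
    have h5 : (σ1 / Real.sqrt t) ^ 2 = σ1 ^ 2 / t := by
      rw [div_pow, Real.sq_sqrt ht0.le]
    nlinarith [eucNorm_nonneg (A.mulVec (v i)), h3, h4, h5]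
  have hprod : (σ1 / Real.sqrt t) ^ t ≤ ∏ i, eucNorm (A.mulVec (v i)) := by
    rw [show (σ1 / Real.sqrt t) ^ t = ∏ _i : Fin t, (σ1 / Real.sqrt t) by rw [Finset.prod_const, Finset.card_univ, Fintype.card_fin]]
    exact Finset.prod_le_prod (fun i _ => by positivity) (fun i _ => hv_low i)
  have hM : (σ1 / Real.sqrt t) ^ t ≤ instabilityNumber A t := by
    refine le_trans hprod (le_csSup (instab_bddAbove A t) ⟨v, hv_ortho, rfl⟩)
  refine ⟨?_, hM⟩
  have h6 : ((σ1 / Real.sqrt t) ^ t) ^ 2 = (σ1 ^ 2 / t) ^ t := by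
    rw [← pow_mul, mul_comm t 2, pow_mul, div_pow, Real.sq_sqrt ht0.le]
  have h7 : 0 ≤ (σ1 / Real.sqrt t) ^ t := by positivity
  calc (σ1 ^ 2 / t) ^ t = ((σ1 / Real.sqrt t) ^ t) ^ 2 := h6.symm
  _ ≤ instabilityNumber A t ^ 2 := pow_le_pow_left₀ h7 hM 2
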